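/- Group transforms of Bellman fixed points are Bellman fixed points: for a group-invariant POMDP, if Q : H × A → ℝ is bounded and satisfies the Bellman optimality equation Q = BQ, then for every g ∈ G the function Q_g defined by Q_g(h,a) := Q(g•h, g•a) is bounded and also satisfies Q_g = B Q_g. -/

import Mathlib

open scoped NNReal

/-- A group-invariant POMDP over finite types of states `S`, actions `A`,
and observations `Ω`, with a group `G` acting on each. -/
structure GIPOMDP (G S A Ω : Type) [Group G] [MulAction G S] [MulAction G A] [MulAction G Ω]
    [Fintype S] [Fintype A] [Fintype Ω] where
  b0 : S → ℝ≥0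
  T : S → A → S → ℝ≥0
  R : S → A → ℝ
  O0 : S → Ω → ℝ≥0
  O : A → S → Ω → ℝ≥0
  b0_sum : ∑ s, b0 s = 1
  b0_inv : ∀ (g : G) (s : S), b0 (g • s) = b0 s
  T_sum : ∀ (s : S) (a : A), ∑ s', T s a s' = 1
  T_inv : ∀ (g : G) (s : S) (a : A) (s' : S), T (g • s) (g • a) (g • s') = T s a s'
  R_inv : ∀ (g : G) (s : S) (a : A), R (g • s) (g • a) = R s a
  O0_sum : ∀ s : S, ∑ o, O0 s o = 1
  O0_inv : ∀ (g : G) (s : S) (o : Ω), O0 (g • s) (g • o) = O0 s o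
  O_sum : ∀ (a : A) (s' : S), ∑ o, O a s' o = 1
  O_inv : ∀ (g : G) (a : A) (s' : S) (o : Ω), O (g • a) (g • s') (g • o) = O a s' o

/-- A history: an initial observation followed by a list of action–observation pairs. -/
abbrev Hist (A Ω : Type) : Type := Ω × List (A × Ω)

variable {G S A Ω : Type} [Group G] [MulAction G S] [MulAction G A] [MulAction G Ω]
  [Fintype S] [Fintype A] [Fintype Ω]

/-- Componentwise group action on histories. -/
def histAct (g : G) (h : Hist A Ω) : Hist A Ω :=
  (g • h.1, h.2.map fun p => (g • p.1, g • p.2))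

/-- Appending an action–observation pair to a history: `h·(a,o)`. -/
def snocH (h : Hist A Ω) (a : A) (o : Ω) : Hist A Ω :=
  (h.1, h.2 ++ [(a, o)])

/-- Unnormalized filter weight, by recursion on the reversed action–observation list. -/
noncomputable def wRev (P : GIPOMDP G S A Ω) (o0 : Ω) : List (A × Ω) → S → ℝ≥0
  | [] => fun s => P.b0 s * P.O0 s o0
  | (a, o) :: rest => fun s' => (∑ s, wRev P o0 rest s * P.T s a s') * P.O a s' o

/-- Unnormalized filter weight `w_h(s)`: `w_{(o0,[])}(s) = b0(s)·O0(s,o0)` and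
`w_{h·(a,o)}(s') = (Σ_s w_h(s)·T(s,a,s'))·O(a,s',o)`. -/
noncomputable def w (P : GIPOMDP G S A Ω) (h : Hist A Ω) (s : S) : ℝ≥0 :=
  wRev P h.1 h.2.reverse s

/-- Belief `Pr(s|h)`, with the convention that it is `0` when the weights sum to `0`. -/
noncomputable def belief (P : GIPOMDP G S A Ω) (h : Hist A Ω) (s : S) : ℝ≥0 :=
  if 0 < ∑ s', w P h s' then w P h s / ∑ s', w P h s' else 0

/-- Conditional observation probability `Pr(o|h,a) = Σ_s Pr(s|h)·Σ_{s'} T(s,a,s')·O(a,s',o)`. -/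
noncomputable def probObs (P : GIPOMDP G S A Ω) (h : Hist A Ω) (a : A) (o : Ω) : ℝ≥0 :=
  ∑ s, belief P h s * ∑ s', P.T s a s' * P.O a s' o

open Classical in
/-- History-MDP transition function: `T̄(h,a,h') = Pr(o|h,a)` if `h' = h·(a,o)` for some `o`,
and `0` otherwise. -/
noncomputable def Tbar (P : GIPOMDP G S A Ω) (h : Hist A Ω) (a : A) (h' : Hist A Ω) : ℝ≥0 :=
  ∑ o, if h' = snocH h a o then probObs P h a o else 0

/-- History-MDP reward function `R̄(h,a) = Σ_s Pr(s|h)·R(s,a)`. -/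
noncomputable def Rbar (P : GIPOMDP G S A Ω) (h : Hist A Ω) (a : A) : ℝ :=
  ∑ s, (belief P h s : ℝ) * P.R s a

/-- Bellman optimality operator of the History-MDP:
`(BQ)(h,a) = R̄(h,a) + γ·Σ_o Pr(o|h,a)·max_{a'} Q(h·(a,o), a')`. -/
noncomputable def bellman [Nonempty A] (P : GIPOMDP G S A Ω) (γ : ℝ)
    (Q : Hist A Ω × A → ℝ) : Hist A Ω × A → ℝ :=
  fun x => Rbar P x.1 x.2 + γ * ∑ o, (probObs P x.1 x.2 o : ℝ) *
    Finset.univ.sup' Finset.univ_nonempty (fun a' => Q (snocH x.1 x.2 o, a'))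


section Helpers

variable [Nonempty S] [Nonempty A] [Nonempty Ω]

lemma sup'_perm {α : Type} [Fintype α] [Nonempty α] (e : Equiv.Perm α) (f : α → ℝ) :
    Finset.univ.sup' Finset.univ_nonempty (fun a => f (e a)) =
      Finset.univ.sup' Finset.univ_nonempty f := by
  apply le_antisymm
  · exact Finset.sup'_le _ _ fun a _ => Finset.le_sup' f (Finset.mem_univ (e a))
  · refine Finset.sup'_le _ _ fun a _ => ?_
    have := Finset.le_sup' (fun a => f (e a)) (Finset.mem_univ (e.symm a))
    simpa only [Equiv.apply_symm_apply] using this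

lemma wRev_smul (P : GIPOMDP G S A Ω) (g : G) (o0 : Ω) (l : List (A × Ω)) (s : S) :
    wRev P (g • o0) (l.map fun p => (g • p.1, g • p.2)) (g • s) = wRev P o0 l s := by
  induction l generalizing s with
  | nil => simp [wRev, P.b0_inv, P.O0_inv]
  | cons p rest ih =>
    obtain ⟨a, o⟩ := p
    simp only [List.map_cons, wRev]
    rw [P.O_inv]
    congr 1
    rw [← Equiv.sum_comp (MulAction.toPerm g)
      (fun s1 => wRev P (g • o0) (rest.map fun p => (g • p.1, g • p.2)) s1
        * P.T s1 (g • a) (g • s))]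
    refine Finset.sum_congr rfl fun s1 _ => ?_
    simp only [MulAction.toPerm_apply]
    rw [ih, P.T_inv]

lemma w_smul (P : GIPOMDP G S A Ω) (g : G) (h : Hist A Ω) (s : S) :
    w P (histAct g h) (g • s) = w P h s := by
  show wRev P (g • h.1) ((h.2.map fun p => (g • p.1, g • p.2)).reverse) (g • s) = _
  rw [← List.map_reverse]
  exact wRev_smul P g h.1 h.2.reverse s

lemma wsum_smul (P : GIPOMDP G S A Ω) (g : G) (h : Hist A Ω) :
    ∑ s, w P (histAct g h) s = ∑ s, w P h s := by
  rw [← Equiv.sum_comp (MulAction.toPerm g) (fun s => w P (histAct g h) s)]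
  exact Finset.sum_congr rfl fun s _ => w_smul P g h s

lemma belief_smul (P : GIPOMDP G S A Ω) (g : G) (h : Hist A Ω) (s : S) :
    belief P (histAct g h) (g • s) = belief P h s := by
  simp only [belief, wsum_smul, w_smul]

lemma probObs_smul (P : GIPOMDP G S A Ω) (g : G) (h : Hist A Ω) (a : A) (o : Ω) :
    probObs P (histAct g h) (g • a) (g • o) = probObs P h a o := by
  unfold probObs
  rw [← Equiv.sum_comp (MulAction.toPerm g)]
  refine Finset.sum_congr rfl fun s _ => ?_
  simp only [MulAction.toPerm_apply]
  rw [belief_smul]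
  congr 1
  rw [← Equiv.sum_comp (MulAction.toPerm g)]
  refine Finset.sum_congr rfl fun s' _ => ?_
  simp only [MulAction.toPerm_apply]
  rw [P.T_inv, P.O_inv]

lemma Rbar_smul (P : GIPOMDP G S A Ω) (g : G) (h : Hist A Ω) (a : A) :
    Rbar P (histAct g h) (g • a) = Rbar P h a := by
  unfold Rbar
  rw [← Equiv.sum_comp (MulAction.toPerm g)]
  refine Finset.sum_congr rfl fun s _ => ?_
  simp only [MulAction.toPerm_apply]
  rw [belief_smul, P.R_inv]

lemma snocH_smul (g : G) (h : Hist A Ω) (a : A) (o : Ω) :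
    snocH (histAct g h) (g • a) (g • o) = histAct g (snocH h a o) := by
  simp [snocH, histAct]

end Helpers

/-- Group transforms of Bellman fixed points are Bellman fixed points: if `Q` is bounded
and `Q = BQ`, then for every `g` the function `Q_g(h,a) := Q(g•h, g•a)` is bounded and
satisfies `Q_g = B Q_g`. -/
theorem bellman_fixedPoint_smul {G S A Ω : Type} [Group G] [MulAction G S] [MulAction G A] [MulAction G Ω]
    [Fintype S] [Fintype A] [Fintype Ω] [Nonempty S] [Nonempty A] [Nonempty Ω]
    (P : GIPOMDP G S A Ω)
    (γ : ℝ) (hγ0 : 0 ≤ γ) (hγ1 : γ < 1)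
    (Q : Hist A Ω × A → ℝ) (hBdd : ∃ C : ℝ, ∀ x : Hist A Ω × A, |Q x| ≤ C)
    (hFix : Q = bellman P γ Q) :
    ∀ g : G,
      (∃ C : ℝ, ∀ x : Hist A Ω × A, |Q (histAct g x.1, g • x.2)| ≤ C) ∧
        (fun x : Hist A Ω × A => Q (histAct g x.1, g • x.2)) =
          bellman P γ (fun x : Hist A Ω × A => Q (histAct g x.1, g • x.2)) := by

  intro g
  obtain ⟨C, hC⟩ := hBdd
  refine ⟨⟨C, fun x => hC _⟩, ?_⟩
  funext x
  obtain ⟨h, a⟩ := x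
  conv_lhs => rw [hFix]
  simp only [bellman, Rbar_smul]
  congr 1
  congr 1
  rw [← Equiv.sum_comp (MulAction.toPerm g)
    (fun o => (probObs P (histAct g h) (g • a) o : ℝ) *
      Finset.univ.sup' Finset.univ_nonempty
        (fun a' => Q (snocH (histAct g h) (g • a) o, a')))]
  refine Finset.sum_congr rfl fun o _ => ?_
  simp only [MulAction.toPerm_apply]
  rw [probObs_smul, snocH_smul]
  congr 1
  rw [← sup'_perm (MulAction.toPerm g) (fun a' => Q (histAct g (snocH h a o), a'))]
  rfl
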